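/- Let n, t ≥ 1 and let u = x_{i_1}x_{i_2}⋯x_{i_d} ∈ M_{n,d,t} with i_1 < i_2 < ⋯ < i_d. If Gap_t(u) = ∅, then u = x_{n−(d−1)t}⋯x_{n−t}x_n is the smallest element of M_{n,d,t} with respect to >_slex. Otherwise, setting p = max(Gap_t(u)), the largest element v of M_{n,d,t} with v <_slex u is v = x_{i_1}⋯x_{i_{p−1}}·x_{i_p+1}·x_{i_p+1+t}·x_{i_p+1+2t}⋯x_{i_p+1+(d−p)t} (for p = d this reads v = x_{i_1}⋯x_{i_{d−1}}·x_{i_d+1}). -/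

import Mathlib

open MvPolynomial

/-- A degree-`d` `t`-spread monomial of `K[x_1,…,x_n]`, recorded by its weakly increasing
(1-based) sequence of variable indices `idx 0 ≤ idx 1 ≤ ⋯` with consecutive gaps at least `t`.
For `t ≥ 1` these are exactly the `t`-spread monomials `x_{i_1}⋯x_{i_d}` with
`i_{j+1} - i_j ≥ t`, and for `t = 0` all monomials of degree `d` (written with sorted indices). -/
structure SpreadMono (n d t : ℕ) where
  idx : Fin d → ℕ
  one_le : ∀ j, 1 ≤ idx j
  le_n : ∀ j, idx j ≤ n
  spread : ∀ (j : Fin d) (h : (j : ℕ) + 1 < d), idx j + t ≤ idx ⟨(j : ℕ) + 1, h⟩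

namespace SpreadMono

variable {n d t : ℕ}

/-- The (0-based) variable of `Fin n` corresponding to the `j`-th (1-based) index. -/
def var (u : SpreadMono n d t) (j : Fin d) : Fin n :=
  ⟨u.idx j - 1, by have h1 := u.one_le j; have h2 := u.le_n j; omega⟩

/-- The exponent vector of the monomial `x_{i_1}⋯x_{i_d}`. -/
noncomputable def expVec (u : SpreadMono n d t) : Fin n →₀ ℕ :=
  ∑ j, Finsupp.single (u.var j) 1

/-- The monomial `x_{i_1}⋯x_{i_d}` as an element of `MvPolynomial (Fin n) K`. -/
noncomputable def toMvPoly (K : Type*) [Field K] (u : SpreadMono n d t) :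
    MvPolynomial (Fin n) K :=
  MvPolynomial.monomial u.expVec 1

/-- Strict lexicographic order on index sequences. -/
def seqLT (f g : Fin d → ℕ) : Prop :=
  ∃ s : Fin d, (∀ j, j < s → f j = g j) ∧ f s < g s

/-- Lexicographic order (≤) on index sequences. -/
def seqLE (f g : Fin d → ℕ) : Prop := f = g ∨ seqLT f g

/-- `u ≥_slex v`: a monomial is `slex`-larger iff its index sequence is lex-smaller. -/
def slexGE (u v : SpreadMono n d t) : Prop := seqLE u.idx v.idx

/-- `u >_slex v`. -/
def slexGT (u v : SpreadMono n d t) : Prop := seqLT u.idx v.idx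

/-- The `t`-spread lexsegment `L_t(u,v) = {w : u ≥_slex w ≥_slex v}`. -/
def lexseg (u v : SpreadMono n d t) : Set (SpreadMono n d t) :=
  {w | slexGE u w ∧ slexGE w v}

/-- The initial `t`-spread lexsegment `L^i_t(v) = {w : w ≥_slex v}`. -/
def initialSeg (v : SpreadMono n d t) : Set (SpreadMono n d t) :=
  {w | slexGE w v}

/-- The final `t`-spread lexsegment `L^f_t(u) = {w : w ≤_slex u}`. -/
def finalSeg (u : SpreadMono n d t) : Set (SpreadMono n d t) :=
  {w | slexGE u w}

/-- The ideal of `MvPolynomial (Fin n) K` generated by a set of spread monomials. -/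
noncomputable def idealOf (K : Type*) [Field K] (A : Set (SpreadMono n d t)) :
    Ideal (MvPolynomial (Fin n) K) :=
  Ideal.span ((fun w => toMvPoly K w) '' A)

end SpreadMono

/-- `a ≤_lex b` for exponent vectors of monomials of `K[x_1,…,x_m]`, for the lexicographic
order with `x_1 > x_2 > ⋯ > x_m`: either `a = b`, or at the first position where they
differ `b` has the larger exponent. -/
def monoLE {m : ℕ} (a b : Fin m →₀ ℕ) : Prop :=
  a = b ∨ ∃ i : Fin m, (∀ j, j < i → a j = b j) ∧ a i < b i

open SpreadMono

/-- `u` has a `j`-gap_t (0-based position `j`, i.e. position `j+1` in 1-based notation),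
with the convention `i_{d+1} := n + t`. -/
def hasGap (n t : ℕ) {d : ℕ} (f : Fin d → ℕ) (j : Fin d) : Prop :=
  if h : (j : ℕ) + 1 < d then t < f ⟨(j : ℕ) + 1, h⟩ - f j else t < n + t - f j

lemma SpreadMono.idx_le_idx {n d t : ℕ} (w : SpreadMono n d t) :
    ∀ b (hb : b < d) a (ha : a ≤ b), w.idx ⟨a, by omega⟩ + (b - a) * t ≤ w.idx ⟨b, hb⟩ := by
  intro b
  induction b with
  | zero => intro hb a ha; interval_cases a; simp
  | succ b ih =>
    intro hb a ha
    rcases Nat.eq_or_lt_of_le ha with h | h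
    · subst h; simp
    · have hb' : b < d := by omega
      have h1 := ih hb' a (by omega)
      have h2 := w.spread ⟨b, hb'⟩ (by simpa using hb)
      have h3 : (b + 1 - a) * t = (b - a) * t + t := by
        rw [show b + 1 - a = (b - a) + 1 by omega]; ring
      simp only at h2
      omega

lemma SpreadMono.chain_eq {n d t : ℕ} (u : SpreadMono n d t) (c : ℕ)
    (H : ∀ q (hq1 : q + 1 < d), c ≤ q → u.idx ⟨q + 1, hq1⟩ = u.idx ⟨q, by omega⟩ + t) :
    ∀ b (hb : b < d) a (ha : a ≤ b) (hc : c ≤ a),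
      u.idx ⟨b, hb⟩ = u.idx ⟨a, by omega⟩ + (b - a) * t := by
  intro b
  induction b with
  | zero => intro hb a ha hc; interval_cases a; simp
  | succ b ih =>
    intro hb a ha hc
    rcases Nat.eq_or_lt_of_le ha with h | h
    · subst h; simp
    · have hb' : b < d := by omega
      have h1 := ih hb' a (by omega) hc
      have h2 := H b hb (by omega)
      have h3 : (b + 1 - a) * t = (b - a) * t + t := by
        rw [show b + 1 - a = (b - a) + 1 by omega]; ring
      omega

lemma seqLE_of_forall_le {d : ℕ} {f g : Fin d → ℕ} (h : ∀ j, f j ≤ g j) :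
    SpreadMono.seqLE f g := by
  by_cases heq : f = g
  · exact Or.inl heq
  · right
    have hne : ∃ j, f j ≠ g j := by
      by_contra hcon
      push_neg at hcon
      exact heq (funext hcon)
    classical
    have hS : (Finset.univ.filter fun j => f j ≠ g j).Nonempty := by
      obtain ⟨j, hj⟩ := hne
      exact ⟨j, by simp [hj]⟩
    set s := (Finset.univ.filter fun j => f j ≠ g j).min' hS with hs
    refine ⟨s, fun j hj => ?_, lt_of_le_of_ne (h s) ?_⟩
    · by_contra hj'
      have : s ≤ j := Finset.min'_le _ _ (by simp [hj'])
      exact absurd hj (not_lt.mpr this)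
    · have := (Finset.univ.filter fun j => f j ≠ g j).min'_mem hS
      rw [← hs] at this
      simpa using this

/-- **Lemma (successor in the slex order).** Let `u = x_{i_1}⋯x_{i_d} ∈ M_{n,d,t}`.
If `Gap_t(u) = ∅` then `u = x_{n-(d-1)t}⋯x_{n-t}x_n` is the smallest element of
`M_{n,d,t}`. Otherwise, if `p = max Gap_t(u)`, the largest `v ∈ M_{n,d,t}` with
`v <_slex u` is `v = x_{i_1}⋯x_{i_{p-1}}·x_{i_p+1}·x_{i_p+1+t}⋯x_{i_p+1+(d-p)t}`
(indices before the gap unchanged; from the gap on, `i_p+1, i_p+1+t, i_p+1+2t, …`). -/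
theorem stmt5 (n d t : ℕ) (hn : 1 ≤ n) (hd : 1 ≤ d) (ht : 1 ≤ t)
    (hnd : 1 + (d - 1) * t ≤ n) (u : SpreadMono n d t) :
    ((∀ j, ¬ hasGap n t u.idx j) →
      (∀ j : Fin d, u.idx j = n - (d - 1 - (j : ℕ)) * t) ∧ ∀ w, slexGE w u) ∧
    (∀ p : Fin d, hasGap n t u.idx p → (∀ q, hasGap n t u.idx q → q ≤ p) →
      ∃ v : SpreadMono n d t,
        (∀ j : Fin d, v.idx j =
          if (j : ℕ) < (p : ℕ) then u.idx j else u.idx p + 1 + ((j : ℕ) - (p : ℕ)) * t) ∧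
        slexGT u v ∧ ∀ w, slexGT u w → slexGE v w) := by

  have hnd' : (d - 1) * t + 1 ≤ n := by omega
  constructor
  · -- Part 1: no gaps
    intro hng
    have hlast : u.idx ⟨d - 1, by omega⟩ = n := by
      have h0 := hng ⟨d - 1, by omega⟩
      simp only [hasGap, Fin.val_mk] at h0
      rw [dif_neg (by omega)] at h0
      have h2 := u.le_n ⟨d - 1, by omega⟩
      have h1 := u.one_le ⟨d - 1, by omega⟩
      omega
    have hstep : ∀ q (hq1 : q + 1 < d), (0:ℕ) ≤ q →
        u.idx ⟨q + 1, hq1⟩ = u.idx ⟨q, by omega⟩ + t := by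
      intro q hq1 _
      have h0 := hng ⟨q, by omega⟩
      simp only [hasGap, Fin.val_mk] at h0
      rw [dif_pos hq1] at h0
      have h2 := u.spread ⟨q, by omega⟩ (by simpa using hq1)
      simp only [Fin.val_mk] at h2
      omega
    have hch := u.chain_eq 0 hstep (d - 1) (by omega)
    constructor
    · intro j
      have hj := hch (j : ℕ) (by omega) (by omega)
      simp only [Fin.eta] at hj
      rw [hlast] at hj
      omega
    · intro w
      apply seqLE_of_forall_le
      intro j
      have h1 := w.idx_le_idx (d - 1) (by omega) (j : ℕ) (by omega)
      simp only [Fin.eta] at h1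
      have h2 := w.le_n ⟨d - 1, by omega⟩
      have hj := hch (j : ℕ) (by omega) (by omega)
      simp only [Fin.eta] at hj
      rw [hlast] at hj
      omega
  · -- Part 2: p = max gap
    intro p hp hpmax
    have hng' : ∀ q (hq1 : q + 1 < d), (p : ℕ) + 1 ≤ q →
        u.idx ⟨q + 1, hq1⟩ = u.idx ⟨q, by omega⟩ + t := by
      intro q hq1 hq
      have hnq : ¬ hasGap n t u.idx ⟨q, by omega⟩ := by
        intro hg
        have := hpmax _ hg
        rw [Fin.le_def] at this
        simp only [Fin.val_mk] at this
        omega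
      simp only [hasGap, Fin.val_mk] at hnq
      rw [dif_pos hq1] at hnq
      have h2 := u.spread ⟨q, by omega⟩ (by simpa using hq1)
      simp only [Fin.val_mk] at h2
      omega
    have hchain := u.chain_eq ((p : ℕ) + 1) hng'
    have hlast' : (p : ℕ) + 1 < d → u.idx ⟨d - 1, by omega⟩ = n := by
      intro hP1
      have hnq : ¬ hasGap n t u.idx ⟨d - 1, by omega⟩ := by
        intro hg
        have := hpmax _ hg
        rw [Fin.le_def] at this
        simp only [Fin.val_mk] at this
        have := p.isLt
        omega
      simp only [hasGap, Fin.val_mk] at hnq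
      rw [dif_neg (by omega)] at hnq
      have h2 := u.le_n ⟨d - 1, by omega⟩
      omega
    have hgapP : ((p : ℕ) + 1 < d → ∀ h1 : (p : ℕ) + 1 < d,
        u.idx p + t + 1 ≤ u.idx ⟨(p : ℕ) + 1, h1⟩) ∧
        (¬ ((p : ℕ) + 1 < d) → u.idx p + 1 ≤ n) := by
      constructor
      · intro hP1 h1
        simp only [hasGap] at hp
        rw [dif_pos h1] at hp
        omega
      · intro hP1
        simp only [hasGap] at hp
        rw [dif_neg hP1] at hp
        have := u.le_n p
        omega
    have hbd : ∀ j : Fin d, (p : ℕ) ≤ (j : ℕ) →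
        u.idx p + 1 + ((j : ℕ) - (p : ℕ)) * t ≤ n := by
      intro j hj
      by_cases hP1 : (p : ℕ) + 1 < d
      · have hA := hchain (d - 1) (by omega) ((p : ℕ) + 1) (by omega) (le_refl _)
        have hB := hlast' hP1
        have hC := hgapP.1 hP1 hP1
        have hD : ((j : ℕ) - (p : ℕ)) * t ≤ (d - 1 - (p : ℕ)) * t :=
          Nat.mul_le_mul_right t (by have := j.isLt; omega)
        have hE : (d - 1 - (p : ℕ)) * t = (d - 1 - ((p : ℕ) + 1)) * t + t := by
          rw [show d - 1 - (p : ℕ) = (d - 1 - ((p : ℕ) + 1)) + 1 by omega]; ring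
        omega
      · have hC := hgapP.2 hP1
        have hj' : (j : ℕ) = (p : ℕ) := by have := j.isLt; omega
        have hz : ((j : ℕ) - (p : ℕ)) * t = 0 := by rw [hj']; simp
        omega
    refine ⟨⟨fun j => if (j : ℕ) < (p : ℕ) then u.idx j
        else u.idx p + 1 + ((j : ℕ) - (p : ℕ)) * t, ?_, ?_, ?_⟩, fun j => rfl, ?_, ?_⟩
    · intro j
      split
      · exact u.one_le j
      · omega
    · intro j
      split
      · exact u.le_n j
      · exact hbd j (by omega)
    · intro j h
      dsimp only
      have hsp := u.spread j h
      split_ifs with h1 h2 h2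
      · exact hsp
      · -- j < p, j+1 = p
        have hPeq : (⟨(j : ℕ) + 1, h⟩ : Fin d) = p := Fin.ext (by simp; omega)
        rw [hPeq] at hsp
        calc u.idx j + t ≤ u.idx p := hsp
          _ ≤ u.idx p + 1 + (((j : ℕ) + 1) - (p : ℕ)) * t := by
              rw [add_assoc]; exact Nat.le_add_right _ _
      · omega
      · have hE : (((j : ℕ) + 1) - (p : ℕ)) * t = ((j : ℕ) - (p : ℕ)) * t + t := by
          rw [show (j : ℕ) + 1 - (p : ℕ) = ((j : ℕ) - (p : ℕ)) + 1 by omega]; ring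
        omega
    · -- u >slex v
      refine ⟨p, fun j hj => ?_, ?_⟩
      · dsimp only
        rw [if_pos (by exact hj)]
      · dsimp only
        rw [if_neg (lt_irrefl _)]
        simp
    · -- maximality
      rintro w ⟨s, hseq, hslt⟩
      rcases lt_trichotomy s p with hs | hs | hs
      · right
        refine ⟨s, fun j hj => ?_, ?_⟩
        · dsimp only
          rw [if_pos (by have : j < p := lt_trans hj hs; exact this), hseq j hj]
        · dsimp only
          rw [if_pos (by exact hs)]
          exact hslt
      · subst hs
        apply seqLE_of_forall_le
        intro j
        dsimp only
        by_cases hj : (j : ℕ) < (s : ℕ)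
        · rw [if_pos hj, hseq j hj]
        · rw [if_neg hj]
          have h1 : u.idx s + 1 ≤ w.idx s := hslt
          have h2 := w.idx_le_idx (j : ℕ) j.isLt (s : ℕ) (by omega)
          simp only [Fin.eta] at h2
          exact le_trans (Nat.add_le_add_right h1 _) h2
      · exfalso
        have hP1 : (p : ℕ) + 1 < d := by have := s.isLt; have : (p:ℕ) < (s:ℕ) := hs; omega
        have hlastn := hlast' hP1
        have hch2 := hchain (d - 1) (by omega) (s : ℕ) (by have := s.isLt; omega)
          (by have : (p:ℕ) < (s:ℕ) := hs; omega)
        simp only [Fin.eta] at hch2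
        have h1 : u.idx s + 1 ≤ w.idx s := hslt
        have h2 := w.idx_le_idx (d - 1) (by omega) (s : ℕ) (by have := s.isLt; omega)
        simp only [Fin.eta] at h2
        have h3 := w.le_n ⟨d - 1, by omega⟩
        omega
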